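/- arXiv:1512.04372 — 2 statements merged into one kernel-verified Lean document; each statement's English description precedes it below -/
import Mathlib

section
/- Let (A, m) be a two-dimensional Buchsbaum Noetherian local ring with infinite residue field and depth A > 0, let I be an m-primary ideal, let J be a minimal reduction of I, and let x, y be a superficial sequence of I with J = (x, y). Set r = r_J(I). Then for all n ≥ r, I^{n+1} : x = I^n + y^{n−r}·(I^{r+1} : x). -/
open Ideal Filter IsLocalRing Polynomial

section Defs

variable {A : Type*} [CommRing A]

/-- The Ratliff–Rush closure of `I ^ n`, `(I^n)~ = ⋃_{t ≥ 0} (I^{n+t} : I^t)`. -/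
noncomputable def ratliffRush (I : Ideal A) (n : ℕ) : Ideal A :=
  ⨆ t : ℕ, Submodule.colon (I ^ (n + t)) ((I ^ t : Ideal A) : Set A)

/-- The Ratliff–Rush index `s(I)`: the least `m ≥ 0` such that
`Ĩ = I^{n+1} : I^n` for all `n ≥ m`. -/
noncomputable def rrIndex (I : Ideal A) : ℕ :=
  sInf {m : ℕ | ∀ n ≥ m, Submodule.colon (I ^ (n + 1)) ((I ^ n : Ideal A) : Set A) = ratliffRush I 1}

/-- The Ratliff–Rush regularity `s*(I)`: the least `m ≥ 1` such that
`(I^n)~ = I^n` for all `n ≥ m`. -/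
noncomputable def rrReg (I : Ideal A) : ℕ :=
  sInf {m : ℕ | 1 ≤ m ∧ ∀ n ≥ m, ratliffRush I n = I ^ n}

/-- `J` is a reduction of `I`. -/
def IsReduction (J I : Ideal A) : Prop :=
  J ≤ I ∧ ∃ n : ℕ, I ^ (n + 1) = J * I ^ n

/-- `J` is a minimal reduction of `I`. -/
def IsMinimalReduction (J I : Ideal A) : Prop :=
  IsReduction J I ∧ ∀ J' : Ideal A, IsReduction J' I → J' ≤ J → J' = J

/-- The reduction number `r_J(I)`. -/
noncomputable def reductionNumber (J I : Ideal A) : ℕ :=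
  sInf {n : ℕ | I ^ (n + 1) = J * I ^ n}

/-- `x ∈ I` is a superficial element for `I`. -/
def IsSuperficialElem (I : Ideal A) (x : A) : Prop :=
  x ∈ I ∧ ∃ c : ℕ, ∀ᶠ n : ℕ in atTop,
    Submodule.colon (I ^ (n + 1)) (Ideal.span {x}) ⊓ I ^ c = I ^ n

/-- `x_1, …, x_s` is a superficial sequence of `I`: for each `i`, the image of `x_i`
is a superficial element for the image of `I` in `A/(x_1, …, x_{i-1})`. -/
def IsSuperficialSeq (I : Ideal A) (xs : List A) : Prop :=
  ∀ i (h : i < xs.length),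
    IsSuperficialElem (I.map (Ideal.Quotient.mk (Ideal.span {a : A | a ∈ xs.take i})))
      (Ideal.Quotient.mk _ (xs.get ⟨i, h⟩))

/-- The Castelnuovo–Mumford regularity `reg R(I)` (equivalently `reg G(I)`) of the Rees
algebra `R(I) = ⊕_{n ≥ 0} I^n`, formalized (since graded local cohomology is not available
in Mathlib) through Trung's characterization [Tr2, Theorem 4.8]:
`reg R(I) = min{n ≥ r_J(I) | I^{n+1} ∩ ((x_1,…,x_{i-1}) : x_i) = (x_1,…,x_{i-1})I^n, i = 1,…,s}`
for a superficial sequence `x_1, …, x_s` generating a reduction `J` of `I`. -/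
noncomputable def regRees (I : Ideal A) : ℕ :=
  sInf {n : ℕ | ∃ xs : List A, IsSuperficialSeq I xs ∧
    IsReduction (Ideal.span {a : A | a ∈ xs}) I ∧
    reductionNumber (Ideal.span {a : A | a ∈ xs}) I ≤ n ∧
    ∀ i (h : i < xs.length),
      I ^ (n + 1) ⊓
          Submodule.colon (Ideal.span {a : A | a ∈ xs.take i}) (Ideal.span {xs.get ⟨i, h⟩}) =
        Ideal.span {a : A | a ∈ xs.take i} * I ^ n}

/-- `xs` is a regular sequence on `A`. -/
def IsRegularSeq (xs : List A) : Prop :=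
  (∀ i (h : i < xs.length) (a : A),
      xs.get ⟨i, h⟩ * a ∈ Ideal.span {b : A | b ∈ xs.take i} →
        a ∈ Ideal.span {b : A | b ∈ xs.take i}) ∧
  Ideal.span {b : A | b ∈ xs} ≠ ⊤

/-- The depth of `A` with respect to the ideal `J`: the supremum of the lengths of
regular sequences contained in `J`. -/
noncomputable def depthIn (J : Ideal A) : ℕ∞ :=
  sSup {n : ℕ∞ | ∃ xs : List A, (xs.length : ℕ∞) = n ∧ (∀ x ∈ xs, x ∈ J) ∧ IsRegularSeq xs}

/-- `I` is a parameter ideal (w.r.t. the maximal ideal `𝔪`): it is generated by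
`dim A` elements and is `𝔪`-primary. -/
def IsParameterIdealFor (𝔪 I : Ideal A) : Prop :=
  ∃ xs : List A, (xs.length : WithBot ℕ∞) = ringKrullDim A ∧
    I = Ideal.span {a : A | a ∈ xs} ∧ I.radical = 𝔪

/-- A local ring `B` is Buchsbaum if every system of parameters `x_1, …, x_r` satisfies
`(x_1, …, x_{i-1}) : x_i = (x_1, …, x_{i-1}) : 𝔪`. -/
def IsBuchsbaum (B : Type*) [CommRing B] [IsLocalRing B] : Prop :=
  ∀ xs : List B, (xs.length : WithBot ℕ∞) = ringKrullDim B →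
    (Ideal.span {a : B | a ∈ xs}).radical = maximalIdeal B →
    ∀ i (h : i < xs.length),
      Submodule.colon (Ideal.span {a : B | a ∈ xs.take i}) (Ideal.span {xs.get ⟨i, h⟩}) =
        Submodule.colon (Ideal.span {a : B | a ∈ xs.take i}) (maximalIdeal B)

/-- `J·R(Q)` inside the Rees algebra `R(Q)`. -/
noncomputable def mRees (J Q : Ideal A) : Ideal (reesAlgebra Q) :=
  Ideal.span ((algebraMap A (reesAlgebra Q)) '' J)

/-- `R(Q)/J·R(Q)`.  For `J = 𝔪` this is the fiber ring `F(Q) = ⊕ Q^n/𝔪Q^n`;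
for `J = Q` it is the associated graded ring `G(Q) = ⊕ Q^n/Q^{n+1}`. -/
abbrev ReesQuot (J Q : Ideal A) :=
  (reesAlgebra Q) ⧸ (mRees J Q)

/-- The ideal of the Rees algebra `R(Q)` of elements whose degree-zero component lies
in `𝔪`. -/
noncomputable def reesAug (𝔪 Q : Ideal A) : Ideal (reesAlgebra Q) where
  carrier := {p | ((p : A[X]).coeff 0) ∈ 𝔪}
  add_mem' := by
    intro a b ha hb
    simpa using Ideal.add_mem 𝔪 ha hb
  zero_mem' := by simp
  smul_mem' := by
    intro c p hp
    have : (((c * p : reesAlgebra Q) : A[X])).coeff 0 = ((c : A[X])).coeff 0 * ((p : A[X])).coeff 0 := by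
      rw [MulMemClass.coe_mul, Polynomial.mul_coeff_zero]
    simpa [smul_eq_mul, this] using Ideal.mul_mem_left 𝔪 _ hp

/-- The maximal graded ideal of `R(Q)/J·R(Q)` (for the local/graded maximal ideal `𝔪`). -/
noncomputable def gradedMax (𝔪 J Q : Ideal A) : Ideal (ReesQuot J Q) :=
  (reesAug 𝔪 Q).map (Ideal.Quotient.mk (mRees J Q))

/-- The Castelnuovo–Mumford regularity of the fiber ring `F(Q) = R(Q)/𝔪R(Q)`;
as `F(Q)` is standard graded with maximal graded ideal `𝔫`, it equals
`reg R(𝔫) = reg G(𝔫)`, which is how we formalize it. -/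
noncomputable def regFiber (𝔪 Q : Ideal A) : ℕ :=
  regRees (A := ReesQuot 𝔪 Q) (gradedMax 𝔪 𝔪 Q)

/-- `xs` is a d-sequence. -/
def IsDSequence (xs : List A) : Prop :=
  (∀ i (h : i < xs.length), xs.get ⟨i, h⟩ ∉ Ideal.span {a : A | a ∈ xs.eraseIdx i}) ∧
  ∀ i k (hik : i ≤ k) (hk : k < xs.length),
    Submodule.colon (Ideal.span {a : A | a ∈ xs.take i})
        (Ideal.span {xs.get ⟨i, lt_of_le_of_lt hik hk⟩ * xs.get ⟨k, hk⟩}) =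
      Submodule.colon (Ideal.span {a : A | a ∈ xs.take i})
        (Ideal.span {xs.get ⟨i, lt_of_le_of_lt hik hk⟩})

/-- The length of a module, as the Krull dimension of its lattice of submodules. -/
noncomputable def moduleLength (R M : Type*) [Ring R] [AddCommGroup M] [Module R M] :
    WithBot ℕ∞ :=
  Order.krullDim (Submodule R M)

end Defs

section GradedDefs

variable {k A : Type*} [CommSemiring k] [CommRing A] [Algebra k A]

/-- The initial Ratliff–Rush regularity `s*_ini(I)` of an ideal generated in degree `d`
of a graded algebra with grading `𝒜`: the least `m ≥ 1` such that
`((I^n)~)_{nd} = (I^n)_{nd}` for all `n ≥ m`. -/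
noncomputable def rrRegIni (𝒜 : ℕ → Submodule k A) (I : Ideal A) (d : ℕ) : ℕ :=
  sInf {m : ℕ | 1 ≤ m ∧ ∀ n ≥ m,
    (ratliffRush I n : Set A) ∩ (𝒜 (n * d) : Set A) =
      ((I ^ n : Ideal A) : Set A) ∩ (𝒜 (n * d) : Set A)}

end GradedDefs

/-- Let `A` be a two-dimensional Buchsbaum Noetherian local ring with
positive depth and infinite residue field, `I` an `𝔪`-primary ideal and `x, y` a superficial
sequence of `I` generating a minimal reduction `J = (x, y)`.  Setting `r = r_J(I)`, for every
`n ≥ r` one has `I^{n+1} : x = I^n + y^{n−r}·(I^{r+1} : x)`. -/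
theorem statement_8 {A : Type*} [CommRing A] [IsNoetherianRing A] [IsLocalRing A]
    [Infinite (IsLocalRing.ResidueField A)]
    (hdim : ringKrullDim A = 2) (hB : IsBuchsbaum A)
    (hdepth : 0 < depthIn (IsLocalRing.maximalIdeal A))
    (I : Ideal A) (hI : I.radical = IsLocalRing.maximalIdeal A)
    (x y : A) (hsup : IsSuperficialSeq I [x, y])
    (hJ : IsMinimalReduction (Ideal.span {x, y}) I) :
    ∀ n : ℕ, reductionNumber (Ideal.span {x, y}) I ≤ n →
      Submodule.colon (I ^ (n + 1)) (Ideal.span {x}) =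
        I ^ n + Ideal.span {y ^ (n - reductionNumber (Ideal.span {x, y}) I)} *
          Submodule.colon (I ^ (reductionNumber (Ideal.span {x, y}) I + 1))
            (Ideal.span {x}) := by
  intro n hn
  set J := Ideal.span ({x, y} : Set A) with hJdef
  set r := reductionNumber J I with hrdef
  have hxJ : x ∈ J := Ideal.subset_span (by simp)
  have hyJ : y ∈ J := Ideal.subset_span (by simp)
  have hJI : J ≤ I := hJ.1.1
  have hxI : x ∈ I := hJI hxJ
  have hyI : y ∈ I := hJI hyJ
  -- reduction facts
  have hr : I ^ (r + 1) = J * I ^ r := Nat.sInf_mem (⟨hJ.1.2.choose, hJ.1.2.choose_spec⟩ :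
    Set.Nonempty {n : ℕ | I ^ (n + 1) = J * I ^ n})
  have hred0 : ∀ k : ℕ, I ^ (r + k + 1) = J * I ^ (r + k) := by
    intro k
    induction k with
    | zero => simpa using hr
    | succ k ih =>
      have : I ^ (r + (k + 1) + 1) = I ^ (r + k + 1) * I := by ring
      rw [this, ih, mul_assoc, ← pow_succ]
      rfl
  have hred : ∀ m : ℕ, r ≤ m → I ^ (m + 1) = J * I ^ m := by
    intro m hm
    obtain ⟨k, rfl⟩ : ∃ k, m = r + k := ⟨m - r, (Nat.add_sub_cancel' hm).symm⟩
    exact hred0 k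
  -- radical of J
  have hradJ : J.radical = maximalIdeal A := by
    apply le_antisymm
    · exact hI ▸ Ideal.radical_mono hJI
    · have hIrad : I ≤ J.radical := by
        intro a ha
        have h1 : a ^ (r + 1) ∈ I ^ (r + 1) := Ideal.pow_mem_pow ha (r + 1)
        rw [hr] at h1
        exact Ideal.mem_radical_iff.mpr ⟨r + 1, Ideal.mul_le.2 (fun s hs t _ => J.mul_mem_right t hs) h1⟩
      calc maximalIdeal A = I.radical := hI.symm
        _ ≤ J.radical.radical := Ideal.radical_mono hIrad
        _ = J.radical := Ideal.radical_idem J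
  -- Buchsbaum on [x, y]
  have hset2 : ({a : A | a ∈ [x, y]}) = {x, y} := by ext a; simp
  have hlen2 : (([x, y].length : ℕ) : WithBot ℕ∞) = ringKrullDim A := by rw [hdim]; simp
  have hrad2 : (Ideal.span {a : A | a ∈ [x, y]}).radical = maximalIdeal A := by
    rw [hset2]; exact hradJ
  have hB0 := hB [x, y] hlen2 hrad2 0 (by norm_num)
  have hB1 := hB [x, y] hlen2 hrad2 1 (by norm_num)
  simp only [List.take_zero, List.take_succ_cons, List.take_zero] at hB0 hB1
  have hsetnil : ({a : A | a ∈ ([] : List A)}) = (∅ : Set A) := by ext a; simp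
  have hsetx : ({a : A | a ∈ [x]}) = ({x} : Set A) := by ext a; simp
  rw [hsetnil, Ideal.span_empty] at hB0
  rw [hsetx] at hB1
  simp only [List.get] at hB0 hB1
  -- Buchsbaum on [x, y^2]
  have hset2' : ({a : A | a ∈ [x, y ^ 2]}) = {x, y ^ 2} := by ext a; simp
  have hrad2' : (Ideal.span {a : A | a ∈ [x, y ^ 2]}).radical = maximalIdeal A := by
    rw [hset2']
    apply le_antisymm
    · refine le_trans (Ideal.radical_mono ?_) (le_of_eq hradJ)
      rw [Ideal.span_le]
      rintro a (rfl | rfl)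
      · exact hxJ
      · show y ^ 2 ∈ J
        rw [pow_two]
        exact J.mul_mem_left y hyJ
    · have hJle : J ≤ (Ideal.span ({x, y ^ 2} : Set A)).radical := by
        rw [hJdef, Ideal.span_le]
        rintro a (rfl | rfl)
        · exact Ideal.le_radical (Ideal.subset_span (by simp))
        · exact ⟨2, Ideal.subset_span (by simp)⟩
      calc maximalIdeal A = J.radical := hradJ.symm
        _ ≤ (Ideal.span ({x, y ^ 2} : Set A)).radical.radical := Ideal.radical_mono hJle
        _ = _ := Ideal.radical_idem _
  have hlen2' : (([x, y ^ 2].length : ℕ) : WithBot ℕ∞) = ringKrullDim A := by rw [hdim]; simp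
  have hB1' := hB [x, y ^ 2] hlen2' hrad2' 1 (by norm_num)
  simp only [List.take_succ_cons, List.take_zero] at hB1'
  rw [hsetx] at hB1'
  simp only [List.get] at hB1'
  -- (x) : y = (x) : y^2
  have hxy : Submodule.colon (Ideal.span {x}) (Ideal.span {y}) =
      Submodule.colon (Ideal.span {x}) (Ideal.span {y ^ 2}) := by
    rw [hB1, hB1']
  -- regular element u in m
  obtain ⟨nn, ⟨xs, hlenxs, hmemxs, hregxs⟩, hpos⟩ := lt_sSup_iff.mp hdepth
  have hxs0 : 0 < xs.length := by
    rcases Nat.eq_zero_or_pos xs.length with h | h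
    · exfalso; rw [h] at hlenxs; simp at hlenxs; rw [← hlenxs] at hpos; simp at hpos
    · exact h
  set u := xs.get ⟨0, hxs0⟩ with hudef
  have humem : u ∈ maximalIdeal A := hmemxs u (List.get_mem xs ⟨0, hxs0⟩)
  have hureg : ∀ a : A, u * a = 0 → a = 0 := by
    intro a ha
    have h0 := hregxs.1 0 hxs0 a
    simp only [List.take_zero] at h0
    rw [hsetnil, Ideal.span_empty] at h0
    have := h0 (by rw [← hudef] at *; simp [ha])
    simpa using this
  -- x is a nonzerodivisor
  have hxreg : ∀ a : A, x * a = 0 → a = 0 := by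
    intro a ha
    have hmem : a ∈ Submodule.colon (⊥ : Ideal A) (Ideal.span {x}) := by
      rw [Submodule.mem_colon]
      intro p hp
      obtain ⟨c, rfl⟩ := Ideal.mem_span_singleton'.mp hp
      have : a * (c * x) = c * (x * a) := by ring
      simp [smul_eq_mul, this, ha]
    rw [hB0] at hmem
    have := Submodule.mem_colon.mp hmem u humem
    simp only [smul_eq_mul, Ideal.mem_bot] at this
    exact hureg a (by linear_combination this)
  -- descent claim
  have claim : ∀ k : ℕ, ∀ c : A, c ∈ I ^ (r + k) → y * c ∈ Ideal.span {x} →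
      ∃ d w : A, x * d ∈ I ^ (r + 1) ∧ w ∈ I ^ (r + k) ∧
        y * c = x * w + x * (y ^ k * d) := by
    intro k
    induction k with
    | zero =>
      intro c hc hyc
      obtain ⟨d, hd⟩ := Ideal.mem_span_singleton'.mp hyc
      refine ⟨d, 0, ?_, zero_mem _, by linear_combination -hd⟩
      have hyc' : y * c ∈ I ^ (r + 1) := by
        have := Ideal.mul_mem_mul hc hyI
        rw [← pow_succ] at this
        simpa [mul_comm] using this
      rw [show x * d = y * c from by linear_combination hd]
      simpa using hyc'
    | succ k ih =>
      intro c hc hyc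
      have hpow : I ^ (r + (k + 1)) =
          Ideal.span {x} * I ^ (r + k) ⊔ Ideal.span {y} * I ^ (r + k) := by
        have h1 : I ^ (r + (k + 1)) = J * I ^ (r + k) := by
          have := hred0 k; rw [show r + (k + 1) = r + k + 1 from rfl]; exact this
        rw [h1, hJdef, Ideal.span_insert, Ideal.sup_mul]
      rw [hpow] at hc
      obtain ⟨p, hp, q, hq, hpq⟩ := Submodule.mem_sup.mp hc
      obtain ⟨uu, huu, hxuu⟩ := Ideal.mem_span_singleton_mul.mp hp
      obtain ⟨v, hv, hyv⟩ := Ideal.mem_span_singleton_mul.mp hq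
      have hceq : c = x * uu + y * v := by rw [hxuu, hyv, hpq]
      -- y^2 * v ∈ (x)
      have hy2v : y ^ 2 * v ∈ Ideal.span {x} := by
        have h1 : x * (y * uu) ∈ Ideal.span {x} :=
          Ideal.mem_span_singleton'.mpr ⟨y * uu, by ring⟩
        have h2 : y * c - x * (y * uu) ∈ Ideal.span {x} := sub_mem hyc h1
        have : y ^ 2 * v = y * c - x * (y * uu) := by rw [hceq]; ring
        rw [this]; exact h2
      have hvmem : v ∈ Submodule.colon (Ideal.span {x}) (Ideal.span {y ^ 2}) := by
        rw [Submodule.mem_colon]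
        intro p hp'
        obtain ⟨e, rfl⟩ := Ideal.mem_span_singleton'.mp hp'
        have : v * (e * y ^ 2) = e * (y ^ 2 * v) := by ring
        rw [smul_eq_mul, this]
        exact Ideal.mul_mem_left _ e hy2v
      rw [← hxy] at hvmem
      have hyv' : y * v ∈ Ideal.span {x} := by
        have := Submodule.mem_colon.mp hvmem y (Ideal.mem_span_singleton_self y)
        simpa [smul_eq_mul, mul_comm] using this
      obtain ⟨d, w', hd, hw', heq⟩ := ih v hv hyv'
      refine ⟨d, y * uu + y * w', hd, ?_, ?_⟩
      · have h1 : uu * y ∈ I ^ (r + k) * I := Ideal.mul_mem_mul huu hyI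
        have h2 : w' * y ∈ I ^ (r + k) * I := Ideal.mul_mem_mul hw' hyI
        rw [← pow_succ] at h1 h2
        have : y * uu + y * w' = uu * y + w' * y := by ring
        rw [show r + (k + 1) = r + k + 1 from rfl, this]
        exact add_mem h1 h2
      · rw [hceq]; ring_nf; linear_combination y * heq
  -- main proof
  apply le_antisymm
  · intro a ha
    have hxa : x * a ∈ I ^ (n + 1) := by
      have := Submodule.mem_colon.mp ha x (Ideal.mem_span_singleton_self x)
      simpa [smul_eq_mul, mul_comm] using this
    obtain ⟨k, rfl⟩ : ∃ k, n = r + k := ⟨n - r, (Nat.add_sub_cancel' hn).symm⟩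
    rw [hred0 k, hJdef, Ideal.span_insert, Ideal.sup_mul] at hxa
    obtain ⟨p, hp, q, hq, hpq⟩ := Submodule.mem_sup.mp hxa
    obtain ⟨b, hb, hxb⟩ := Ideal.mem_span_singleton_mul.mp hp
    obtain ⟨c, hc, hyc⟩ := Ideal.mem_span_singleton_mul.mp hq
    have hxaeq : x * a = x * b + y * c := by rw [hxb, hyc, hpq]
    have hycx : y * c ∈ Ideal.span {x} :=
      Ideal.mem_span_singleton'.mpr ⟨a - b, by linear_combination hxaeq⟩
    obtain ⟨d, w, hd, hw, heq⟩ := claim k c hc hycx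
    have hzero : x * (a - (b + w + y ^ k * d)) = 0 := by linear_combination hxaeq + heq
    have hab : a = b + w + y ^ k * d := sub_eq_zero.mp (hxreg _ hzero)
    rw [hab, Submodule.add_eq_sup]
    have hdmem : d ∈ Submodule.colon (I ^ (r + 1)) (Ideal.span {x}) := by
      rw [Submodule.mem_colon]
      intro p hp'
      obtain ⟨e, rfl⟩ := Ideal.mem_span_singleton'.mp hp'
      have : d * (e * x) = e * (x * d) := by ring
      rw [smul_eq_mul, this]
      exact Ideal.mul_mem_left _ e hd
    have hyk : y ^ k * d ∈ Ideal.span {y ^ (r + k - r)} *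
        Submodule.colon (I ^ (r + 1)) (Ideal.span {x}) := by
      rw [Nat.add_sub_cancel_left]
      exact Ideal.mul_mem_mul (Ideal.mem_span_singleton_self _) hdmem
    exact Submodule.add_mem_sup (add_mem hb hw) hyk
  · rw [Submodule.add_eq_sup]
    apply sup_le
    · intro z hz
      rw [Submodule.mem_colon]
      intro p hp
      obtain ⟨e, rfl⟩ := Ideal.mem_span_singleton'.mp hp
      have h1 : z * x ∈ I ^ n * I := Ideal.mul_mem_mul hz hxI
      rw [← pow_succ] at h1
      have : z * (e * x) = e * (z * x) := by ring
      rw [smul_eq_mul, this]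
      exact Ideal.mul_mem_left _ e h1
    · rw [Ideal.mul_le]
      intro s hs t ht
      obtain ⟨e, rfl⟩ := Ideal.mem_span_singleton'.mp hs
      have hxt : x * t ∈ I ^ (r + 1) := by
        have := Submodule.mem_colon.mp ht x (Ideal.mem_span_singleton_self x)
        simpa [smul_eq_mul, mul_comm] using this
      rw [Submodule.mem_colon]
      intro p hp
      obtain ⟨f, rfl⟩ := Ideal.mem_span_singleton'.mp hp
      have h1 : y ^ (n - r) * (x * t) ∈ I ^ (n - r) * I ^ (r + 1) :=
        Ideal.mul_mem_mul (Ideal.pow_mem_pow hyI _) hxt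
      rw [← pow_add] at h1
      have hexp : n - r + (r + 1) = n + 1 := by omega
      rw [hexp] at h1
      have : (e * y ^ (n - r) * t) * (f * x) = (e * f) * (y ^ (n - r) * (x * t)) := by ring
      rw [smul_eq_mul, this]
      exact Ideal.mul_mem_left _ _ h1
end

section
/- Let k be a field, A = k[x, y], and let a ≤ b < d be positive integers. Let I = (x^d, y^d) + (x^{d−i} y^i : a ≤ i ≤ b). Then (I^n)~ = I^n for all n ≥ 1, i.e. every power of I is Ratliff-Rush closed. -/
open Ideal Filter IsLocalRing Polynomial

namespace Stmt16Aux

open MvPolynomial Pointwise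

/-- Admissible sums: `S` is a sum of `m` values taken from `{0} ∪ [a,b] ∪ {d}`. -/
def Adm (a b d m S : ℕ) : Prop :=
  ∃ p q : ℕ, p + q ≤ m ∧ p * a + q * d ≤ S ∧ S ≤ p * b + q * d

/-- the index set -/
def T (a b d : ℕ) : Set ℕ := ({0, d} : Set ℕ) ∪ Set.Icc a b

/-- Exponent vectors of the generators of `I`. -/
def Gen (a b d : ℕ) : Set (Fin 2 →₀ ℕ) :=
  (fun i => Finsupp.single 0 (d - i) + Finsupp.single 1 i) '' T a b d

/-- `m`-fold sumset of `Gen`. -/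
def SumSet (a b d : ℕ) : ℕ → Set (Fin 2 →₀ ℕ)
  | 0 => {0}
  | m + 1 => SumSet a b d m + Gen a b d

lemma adm_zero (a b d : ℕ) : Adm a b d 0 0 := ⟨0, 0, by simp, by simp, by simp⟩

lemma adm_le {a b d m m' S : ℕ} (h : Adm a b d m S) (hm : m ≤ m') : Adm a b d m' S := by
  obtain ⟨p, q, h1, h2, h3⟩ := h
  exact ⟨p, q, h1.trans hm, h2, h3⟩

lemma adm_add {a b d m S i : ℕ} (ha : 1 ≤ a) (hab : a ≤ b) (hbd : b < d)
    (h : Adm a b d m S) (hi : i ∈ T a b d) : Adm a b d (m + 1) (S + i) := by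
  obtain ⟨p, q, h1, h2, h3⟩ := h
  rcases hi with (hi | hi) | hi
  · rcases hi with rfl; exact ⟨p, q, by omega, by omega, by omega⟩
  · rcases Set.mem_singleton_iff.mp hi with rfl
    exact ⟨p, q + 1, by omega, by nlinarith, by nlinarith⟩
  · obtain ⟨hia, hib⟩ := hi
    exact ⟨p + 1, q, by omega, by nlinarith, by nlinarith⟩

/-- Decomposition: an `(m+1)`-admissible sum is an `m`-admissible sum plus one element of `T`. -/
lemma adm_decomp {a b d m S' : ℕ} (ha : 1 ≤ a) (hab : a ≤ b) (hbd : b < d)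
    (h : Adm a b d (m + 1) S') :
    ∃ S i, Adm a b d m S ∧ i ∈ T a b d ∧ S' = S + i ∧ i ≤ d := by
  obtain ⟨p, q, h1, h2, h3⟩ := h
  by_cases hm : p + q ≤ m
  · exact ⟨S', 0, ⟨p, q, hm, h2, h3⟩, Or.inl (Or.inl rfl), by omega, by omega⟩
  rcases Nat.eq_or_lt_of_le (Nat.zero_le q) with hq | hq
  · -- q = 0, p = m + 1
    have hp : p = m + 1 := by omega
    subst hp
    rw [← hq] at h2 h3
    simp only [Nat.zero_mul, Nat.add_zero] at h2 h3
    -- S' ∈ [(m+1)a, (m+1)b]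
    rcases le_total b (S' - m * a) with hcase | hcase
    · refine ⟨S' - b, b, ⟨m, 0, by omega, ?_, ?_⟩, Or.inr ⟨hab, le_refl b⟩, ?_, by omega⟩
      · have : (m + 1) * a = m * a + a := by ring
        omega
      · have h3' : (m + 1) * b = m * b + b := by ring
        omega
      · have e2 : (m + 1) * a = m * a + a := by ring
        omega
    · refine ⟨m * a, S' - m * a, ⟨m, 0, by omega, le_refl _ |>.trans (by omega), ?_⟩,
        Or.inr ⟨?_, hcase⟩, ?_, by omega⟩
      · exact Nat.mul_le_mul_left m hab |>.trans (by omega)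
      · have : (m + 1) * a = m * a + a := by ring
        omega
      · have : (m + 1) * a = m * a + a := by ring
        omega
  · -- q ≥ 1 : remove a `d`
    obtain ⟨q', rfl⟩ : ∃ q', q = q' + 1 := ⟨q - 1, by omega⟩
    have e1 : (q' + 1) * d = q' * d + d := by ring
    refine ⟨S' - d, d, ⟨p, q', by omega, by omega, by omega⟩,
      Or.inl (Or.inr rfl), by omega, le_refl d⟩

lemma adm_le_mul {a b d m S : ℕ} (hab : a ≤ b) (hbd : b < d) (h : Adm a b d m S) :
    S ≤ m * d := by
  obtain ⟨p, q, h1, h2, h3⟩ := h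
  have : p * b + q * d ≤ p * d + q * d := by
    have := Nat.mul_le_mul_left p (le_of_lt hbd)
    omega
  have : p * d + q * d ≤ m * d := by
    have := Nat.mul_le_mul_right d h1
    nlinarith
  omega

/-- Characterization of the `m`-fold sumset. -/
lemma mem_sumSet_iff {a b d : ℕ} (ha : 1 ≤ a) (hab : a ≤ b) (hbd : b < d)
    {m : ℕ} {e : Fin 2 →₀ ℕ} :
    e ∈ SumSet a b d m ↔
      ∃ c S, Adm a b d m S ∧ c + S = m * d ∧
        e = Finsupp.single 0 c + Finsupp.single 1 S := by
  induction m generalizing e with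
  | zero =>
    simp only [SumSet, Set.mem_singleton_iff]
    constructor
    · rintro rfl
      exact ⟨0, 0, adm_zero a b d, by simp, by simp⟩
    · rintro ⟨c, S, ⟨p, q, h1, h2, h3⟩, hcS, rfl⟩
      have hp : p = 0 := by omega
      have hq : q = 0 := by omega
      subst hp; subst hq
      simp only [Nat.zero_mul, Nat.add_zero, Nat.zero_add] at h2 h3
      have hS : S = 0 := by omega
      have hc : c = 0 := by omega
      simp [hS, hc]
  | succ m ih =>
    constructor
    · rintro hmem
      rw [SumSet] at hmem
      obtain ⟨e1, he1, g, hg, rfl⟩ := Set.mem_add.mp hmem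
      obtain ⟨c, S, hAdm, hcS, rfl⟩ := ih.mp he1
      obtain ⟨i, hi, rfl⟩ := hg
      have hid : i ≤ d := by
        rcases hi with (hi | hi) | hi
        · omega
        · simp only [Set.mem_singleton_iff] at hi; omega
        · obtain ⟨_, h2⟩ := hi; omega
      have hmd : (m + 1) * d = m * d + d := by ring
      refine ⟨c + (d - i), S + i, adm_add ha hab hbd hAdm hi, by omega, ?_⟩
      rw [Finsupp.single_add, Finsupp.single_add]
      abel
    · rintro ⟨c, S', hAdm, hcS, rfl⟩
      obtain ⟨S, i, hAdmS, hi, rfl, hid⟩ := adm_decomp ha hab hbd hAdm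
      have hSmd : S ≤ m * d := adm_le_mul hab hbd hAdmS
      have hc : c = (m * d - S) + (d - i) := by
        have : (m + 1) * d = m * d + d := by ring
        omega
      rw [hc, SumSet]
      have hgmem : (Finsupp.single 0 (d - i) + Finsupp.single 1 i : Fin 2 →₀ ℕ) ∈ Gen a b d :=
        ⟨i, hi, rfl⟩
      refine Set.mem_add.mpr ⟨Finsupp.single 0 (m * d - S) + Finsupp.single 1 S,
        ih.mpr ⟨m * d - S, S, hAdmS, by omega, rfl⟩,
        Finsupp.single 0 (d - i) + Finsupp.single 1 i, hgmem, ?_⟩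
      rw [Finsupp.single_add, Finsupp.single_add]
      abel

/-- The main combinatorial lemma. -/
lemma combinat {a b d n t u v S1 S2 : ℕ} (ha : 1 ≤ a) (hab : a ≤ b) (hbd : b < d)
    (hn : 1 ≤ n)
    (h1 : Adm a b d (n + t) S1) (h1l : (n + t) * d ≤ S1 + (u + t * d)) (h1r : S1 ≤ v)
    (h2 : Adm a b d (n + t) S2) (h2l : (n + t) * d ≤ S2 + u) (h2r : S2 ≤ v + t * d) :
    ∃ S, Adm a b d n S ∧ n * d ≤ S + u ∧ S ≤ v := by
  have hntd : (n + t) * d = n * d + t * d := by ring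
  by_cases hu : n * d ≤ u
  · exact ⟨0, ⟨0, 0, by omega, by simp, by simp⟩, by omega, by omega⟩
  push_neg at hu
  obtain ⟨p2, q2, hpq2, hl2, hr2⟩ := h2
  by_cases hq2 : t ≤ q2
  · -- remove t copies of d from S2
    obtain ⟨q', rfl⟩ : ∃ q', q2 = t + q' := ⟨q2 - t, by omega⟩
    have e1 : (t + q') * d = t * d + q' * d := by ring
    have hS2 : t * d ≤ S2 := by omega
    exact ⟨S2 - t * d, ⟨p2, q', by omega, by omega, by omega⟩, by omega, by omega⟩
  · push_neg at hq2
    obtain ⟨t'', rfl⟩ : ∃ t'', t = q2 + 1 + t'' := ⟨t - q2 - 1, by omega⟩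
    have e3 : (n + (q2 + 1 + t'')) * d = n * d + q2 * d + d + t'' * d := by ring
    have e4 : (n + 1 + t'') * b = n * b + b + t'' * b := by ring
    have e5 : (q2 + 1 + t'') * d = q2 * d + d + t'' * d := by ring
    have hp2b : p2 * b ≤ (n + 1 + t'') * b := Nat.mul_le_mul_right b (by omega)
    have htb : t'' * b ≤ t'' * d := Nat.mul_le_mul_left t'' hbd.le
    have hnb : n * b ≤ n * d := Nat.mul_le_mul_left n hbd.le
    have hkey : n * d + 1 ≤ n * b + u := by omega
    by_cases hv : n * b ≤ v
    · refine ⟨n * b, ⟨n, 0, by omega, ?_, by omega⟩, by omega, hv⟩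
      have := Nat.mul_le_mul_left n hab
      omega
    · push_neg at hv
      obtain ⟨p1, q1, hpq1, hl1, hr1⟩ := h1
      have hq1n : q1 < n := by
        by_contra hcon
        push_neg at hcon
        have := Nat.mul_le_mul_right d hcon
        omega
      obtain ⟨s1, hs1⟩ : ∃ s1, S1 = q1 * d + s1 := ⟨S1 - q1 * d, by omega⟩
      have hs1p : p1 * a ≤ s1 := by omega
      have hs1b : s1 ≤ p1 * b := by omega
      have hb : 0 < b := by omega
      obtain ⟨p, r, hdm, hr⟩ : ∃ p r, b * p + r = s1 + b - 1 ∧ r < b :=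
        ⟨(s1 + b - 1) / b, (s1 + b - 1) % b, Nat.div_add_mod _ _, Nat.mod_lt _ hb⟩
      have hpb : s1 ≤ p * b := by
        have : p * b = b * p := Nat.mul_comm _ _
        omega
      have hple : ∀ P : ℕ, s1 ≤ P * b → p ≤ P := by
        intro P hP
        have hx : b * p < b * (P + 1) := by
          have e : b * (P + 1) = P * b + b := by ring
          omega
        have := Nat.lt_of_mul_lt_mul_left hx
        omega
      have hpp1 : p ≤ p1 := hple p1 hs1b
      have hpa : p * a ≤ s1 := le_trans (Nat.mul_le_mul_right a hpp1) hs1p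
      obtain ⟨n', hn', hnq⟩ : ∃ n', 1 ≤ n' ∧ n = q1 + n' := ⟨n - q1, by omega, by omega⟩
      have hpn : p + q1 ≤ n := by
        have e6 : (q1 + n') * b = q1 * b + n' * b := by ring
        have hq1b : q1 * b ≤ q1 * d := Nat.mul_le_mul_left q1 hbd.le
        have e7 : n * b = q1 * b + n' * b := by rw [hnq]; ring
        have hs1n : s1 ≤ n' * b := by omega
        have := hple n' hs1n
        omega
      exact ⟨S1, ⟨p, q1, hpn, by omega, by omega⟩, by omega, h1r⟩

end Stmt16Aux


namespace Stmt16Aux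

open MvPolynomial

variable {k : Type*} [Field k]

lemma span_gen_eq (a b d : ℕ) :
    Ideal.span (({X 0 ^ d, X 1 ^ d} ∪
      {m | ∃ i, a ≤ i ∧ i ≤ b ∧ m = X 0 ^ (d - i) * X 1 ^ i}) : Set (MvPolynomial (Fin 2) k)) =
    Ideal.span ((fun e => MvPolynomial.monomial e (1 : k)) '' Gen a b d) := by
  congr 1
  rw [Gen, Set.image_image, T, Set.image_union, Set.image_insert_eq, Set.image_singleton]
  congr 1
  · simp [MvPolynomial.X_pow_eq_monomial, MvPolynomial.monomial_mul]
  · ext m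
    simp only [Set.mem_image, Set.mem_Icc, Set.mem_setOf_eq]
    constructor
    · rintro ⟨i, h1, h2, rfl⟩
      exact ⟨i, ⟨h1, h2⟩, by rw [MvPolynomial.X_pow_eq_monomial, MvPolynomial.X_pow_eq_monomial, MvPolynomial.monomial_mul, one_mul]⟩
    · rintro ⟨i, ⟨h1, h2⟩, rfl⟩
      exact ⟨i, h1, h2, by rw [MvPolynomial.X_pow_eq_monomial, MvPolynomial.X_pow_eq_monomial, MvPolynomial.monomial_mul, one_mul]⟩

lemma pow_span_sumSet (a b d m : ℕ) :
    (Ideal.span ((fun e => MvPolynomial.monomial e (1 : k)) '' Gen a b d)) ^ m =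
      Ideal.span ((fun e => MvPolynomial.monomial e (1 : k)) '' SumSet a b d m) := by
  induction m with
  | zero =>
    rw [pow_zero]
    have : SumSet a b d 0 = {0} := rfl
    rw [this, Set.image_singleton]
    simp [Ideal.span_singleton_one]
  | succ m ih =>
    rw [pow_succ, ih, Ideal.span_mul_span']
    congr 1
    rw [SumSet]
    ext f
    simp only [Set.mem_mul, Set.mem_image, Set.mem_add]
    constructor
    · rintro ⟨_, ⟨e1, he1, rfl⟩, _, ⟨e2, he2, rfl⟩, rfl⟩
      exact ⟨e1 + e2, ⟨e1, he1, e2, he2, rfl⟩, by rw [MvPolynomial.monomial_mul, one_mul]⟩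
    · rintro ⟨e, ⟨e1, he1, e2, he2, rfl⟩, rfl⟩
      exact ⟨MvPolynomial.monomial e1 1, ⟨e1, he1, rfl⟩, MvPolynomial.monomial e2 1, ⟨e2, he2, rfl⟩,
        by rw [MvPolynomial.monomial_mul, one_mul]⟩

end Stmt16Aux

open Stmt16Aux in
theorem statement_16' {k : Type*} [Field k] (a b d : ℕ) (ha : 1 ≤ a) (hab : a ≤ b)
    (hbd : b < d) (I : Ideal (MvPolynomial (Fin 2) k))
    (hI : I = Ideal.span ({MvPolynomial.X 0 ^ d, MvPolynomial.X 1 ^ d} ∪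
      {m | ∃ i, a ≤ i ∧ i ≤ b ∧ m = MvPolynomial.X 0 ^ (d - i) * MvPolynomial.X 1 ^ i})) :
    ∀ n : ℕ, 1 ≤ n → (⨆ t : ℕ, Submodule.colon (I ^ (n + t)) ((I ^ t : Ideal (MvPolynomial (Fin 2) k)) : Set (MvPolynomial (Fin 2) k))) = I ^ n := by
  intro n hn
  have hIG : I = Ideal.span ((fun e => MvPolynomial.monomial e (1 : k)) '' Gen a b d) := by
    rw [hI, span_gen_eq]
  have hpow : ∀ m : ℕ,
      I ^ m = Ideal.span ((fun e => MvPolynomial.monomial e (1 : k)) '' SumSet a b d m) := by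
    intro m; rw [hIG, pow_span_sumSet]
  refine le_antisymm (iSup_le fun t => ?_) ?_
  · intro r hr
    have hX0 : (MvPolynomial.X 0 ^ d : MvPolynomial (Fin 2) k) ∈ I := by
      rw [hI]; exact Ideal.subset_span (Or.inl (Or.inl rfl))
    have hX1 : (MvPolynomial.X 1 ^ d : MvPolynomial (Fin 2) k) ∈ I := by
      rw [hI]; exact Ideal.subset_span (Or.inl (Or.inr rfl))
    have hXt0 : ((MvPolynomial.X 0 ^ d) ^ t : MvPolynomial (Fin 2) k) =
        MvPolynomial.monomial (Finsupp.single 0 (t * d)) 1 := by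
      rw [← pow_mul, mul_comm d t, MvPolynomial.X_pow_eq_monomial]
    have hXt1 : ((MvPolynomial.X 1 ^ d) ^ t : MvPolynomial (Fin 2) k) =
        MvPolynomial.monomial (Finsupp.single 1 (t * d)) 1 := by
      rw [← pow_mul, mul_comm d t, MvPolynomial.X_pow_eq_monomial]
    have h1 : r * MvPolynomial.monomial (Finsupp.single (0 : Fin 2) (t * d)) (1 : k)
        ∈ I ^ (n + t) := by
      have := Submodule.mem_colon.mp hr ((MvPolynomial.X 0 ^ d) ^ t) (Ideal.pow_mem_pow hX0 t)
      rwa [smul_eq_mul, hXt0] at this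
    have h2 : r * MvPolynomial.monomial (Finsupp.single (1 : Fin 2) (t * d)) (1 : k)
        ∈ I ^ (n + t) := by
      have := Submodule.mem_colon.mp hr ((MvPolynomial.X 1 ^ d) ^ t) (Ideal.pow_mem_pow hX1 t)
      rwa [smul_eq_mul, hXt1] at this
    rw [hpow] at h1 h2
    rw [hpow n, MvPolynomial.mem_ideal_span_monomial_image]
    intro e he
    have he1 : e + Finsupp.single (0 : Fin 2) (t * d) ∈
        (r * MvPolynomial.monomial (Finsupp.single (0 : Fin 2) (t * d)) (1 : k)).support := by
      rw [MvPolynomial.mem_support_iff, MvPolynomial.coeff_mul_monomial, mul_one]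
      exact MvPolynomial.mem_support_iff.mp he
    have he2 : e + Finsupp.single (1 : Fin 2) (t * d) ∈
        (r * MvPolynomial.monomial (Finsupp.single (1 : Fin 2) (t * d)) (1 : k)).support := by
      rw [MvPolynomial.mem_support_iff, MvPolynomial.coeff_mul_monomial, mul_one]
      exact MvPolynomial.mem_support_iff.mp he
    obtain ⟨g1, hg1mem, hg1le⟩ := MvPolynomial.mem_ideal_span_monomial_image.mp h1 _ he1
    obtain ⟨g2, hg2mem, hg2le⟩ := MvPolynomial.mem_ideal_span_monomial_image.mp h2 _ he2
    obtain ⟨c1, S1, hAdm1, hcS1, rfl⟩ := (mem_sumSet_iff ha hab hbd).mp hg1mem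
    obtain ⟨c2, S2, hAdm2, hcS2, rfl⟩ := (mem_sumSet_iff ha hab hbd).mp hg2mem
    have h10 := Finsupp.le_def.mp hg1le 0
    have h11 := Finsupp.le_def.mp hg1le 1
    have h20 := Finsupp.le_def.mp hg2le 0
    have h21 := Finsupp.le_def.mp hg2le 1
    simp only [Finsupp.add_apply, Finsupp.single_apply, if_pos rfl] at h10 h11 h20 h21
    norm_num at h10 h11 h20 h21
    obtain ⟨S, hAdmS, hSl, hSr⟩ := combinat (u := e 0) (v := e 1) ha hab hbd hn
      hAdm1 (by omega) h11 hAdm2 (by omega) (by omega)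
    have hSnd : S ≤ n * d := adm_le_mul hab hbd hAdmS
    refine ⟨Finsupp.single 0 (n * d - S) + Finsupp.single 1 S,
      (mem_sumSet_iff ha hab hbd).mpr ⟨n * d - S, S, hAdmS, by omega, rfl⟩, ?_⟩
    rw [Finsupp.le_def]
    intro j
    fin_cases j <;> simp [Finsupp.single_apply] <;> omega
  · have h0 : I ^ n ≤ Submodule.colon (I ^ (n + 0)) ((I ^ 0 : Ideal (MvPolynomial (Fin 2) k)) : Set (MvPolynomial (Fin 2) k)) := by
      intro r hr
      rw [Submodule.mem_colon]
      intro p _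
      rw [smul_eq_mul]
      exact Ideal.mul_mem_right p _ hr
    exact h0.trans (le_iSup (fun t => Submodule.colon (I ^ (n + t)) ((I ^ t : Ideal (MvPolynomial (Fin 2) k)) : Set (MvPolynomial (Fin 2) k))) 0)


/-- For positive integers `a ≤ b < d` and
`I = (x^d, y^d) + (x^{d−i}y^i : a ≤ i ≤ b)` in `k[x, y]`, every power of `I` is
Ratliff–Rush closed. -/
theorem statement_16 {k : Type*} [Field k] (a b d : ℕ) (ha : 1 ≤ a) (hab : a ≤ b)
    (hbd : b < d) (I : Ideal (MvPolynomial (Fin 2) k))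
    (hI : I = Ideal.span ({MvPolynomial.X 0 ^ d, MvPolynomial.X 1 ^ d} ∪
      {m | ∃ i, a ≤ i ∧ i ≤ b ∧ m = MvPolynomial.X 0 ^ (d - i) * MvPolynomial.X 1 ^ i})) :
    ∀ n : ℕ, 1 ≤ n → ratliffRush I n = I ^ n := by
  intro n hn
  unfold ratliffRush
  exact statement_16' a b d ha hab hbd I hI n hn
end
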